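/- Analytic core of Proposition 1.5 (ill-posedness when the reversing diffusion explodes, one-dimensional case): Let E ⊆ ℝ be a nonempty open interval with left endpoint α ∈ ℝ ∪ {−∞}, let p, c : E → (0,∞) be such that f := p·c is C² on E. Suppose F(x) := ∫_{E ∩ (−∞,x)} 1/f(t) dt is finite for every x ∈ E, that L := ∫_E 1/f < ∞, and that g := (1/4) f'' − (1/8) f'²/f is Lebesgue integrable on E. For ε > 0 set u := √f and v_ε := √(ε + F). Then for every ε > 0: −∫_E (1/2) c(x) ((u v_ε)''(x)/((u v_ε)(x))) p(x) dx = −∫_E g(x) dx + 1/(8ε) − 1/(8(ε + L)); in particular this quantity tends to +∞ as ε ↓ 0. -/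

import Mathlib

open MeasureTheory

private lemma exists_exhaust_seq (E : Set ℝ) (hE : IsOpen E) (hne : E.Nonempty) :
    ∃ u : ℕ → ℝ, (∀ n, u n ∈ E) ∧ ∀ t ∈ E, ∀ᶠ n in Filter.atTop, u n < t := by
  by_cases hb : BddBelow E
  · have hsinf : sInf E ∉ E := by
      intro hmem
      obtain ⟨δ, hδ, hball⟩ := Metric.isOpen_iff.1 hE _ hmem
      have h1 : sInf E - δ/2 ∈ E := by
        apply hball
        simp only [Metric.mem_ball, Real.dist_eq]
        rw [abs_of_nonpos (by linarith)]
        linarith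
      have := csInf_le hb h1
      linarith
    have hchoice : ∀ n : ℕ, ∃ a ∈ E, a < sInf E + 1/((n:ℝ)+1) :=
      fun n => Real.lt_sInf_add_pos hne (by positivity)
    choose u humem hult using hchoice
    refine ⟨u, humem, fun t ht => ?_⟩
    have hlt : sInf E < t := lt_of_le_of_ne (csInf_le hb ht) (fun h => hsinf (h ▸ ht))
    have htend : Filter.Tendsto (fun n : ℕ => 1/((n:ℝ)+1)) Filter.atTop (nhds 0) :=
      tendsto_one_div_add_atTop_nhds_zero_nat
    have hev : ∀ᶠ n : ℕ in Filter.atTop, 1/((n:ℝ)+1) < t - sInf E :=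
      htend.eventually_lt_const (by linarith)
    filter_upwards [hev] with n hn
    have := hult n
    linarith
  · have hch : ∀ n : ℕ, ∃ a ∈ E, a < -(n:ℝ) := by
      intro n
      by_contra h
      push_neg at h
      exact hb ⟨-(n:ℝ), fun y hy => h y hy⟩
    choose u humem hult using hch
    refine ⟨u, humem, fun t ht => ?_⟩
    filter_upwards [Filter.eventually_ge_atTop ⌈-t⌉₊] with n hn
    have h1 : -t ≤ (n:ℝ) := le_trans (Nat.le_ceil _) (by exact_mod_cast hn)
    have := hult n
    linarith

set_option maxHeartbeats 1600000 in
/-- Analytic core of Proposition 1.5 (ill-posedness when the reversing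
diffusion explodes, one-dimensional case): with `f = pc`, `u = √f`,
`v_ε = √(ε + F)` where `F(x) = ∫_{E∩(−∞,x)} 1/f` and `L = ∫_E 1/f < ∞`,
one has `−∫_E (1/2) c ((u v_ε)''/(u v_ε)) p = −∫_E g + 1/(8ε) − 1/(8(ε+L))`,
which tends to `+∞` as `ε ↓ 0`. -/
theorem explosive_reversing_growth_blowup (E : Set ℝ) (hE : IsOpen E)
    (hne : E.Nonempty) (hconn : E.OrdConnected)
    (p c : ℝ → ℝ) (hp : ∀ x ∈ E, 0 < p x) (hc : ∀ x ∈ E, 0 < c x)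
    (f : ℝ → ℝ) (hf : ∀ x ∈ E, f x = p x * c x) (hf2 : ContDiffOn ℝ 2 f E)
    (F : ℝ → ℝ) (hF : ∀ x, F x = ∫ t in E ∩ Set.Iio x, 1 / f t)
    (hFfin : ∀ x ∈ E, IntegrableOn (fun t => 1 / f t) (E ∩ Set.Iio x))
    (L : ℝ) (hL : L = ∫ t in E, 1 / f t)
    (hLfin : IntegrableOn (fun t => 1 / f t) E)
    (g : ℝ → ℝ)
    (hg : ∀ x ∈ E, g x = (1/4) * deriv (deriv f) x - (1/8) * (deriv f x)^2 / f x)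
    (hgint : IntegrableOn g E) :
    (∀ ε : ℝ, 0 < ε →
      -(∫ x in E, (1/2) * c x *
          (deriv (deriv (fun y => Real.sqrt (f y) * Real.sqrt (ε + F y))) x /
            (Real.sqrt (f x) * Real.sqrt (ε + F x))) * p x)
      = -(∫ x in E, g x) + 1 / (8 * ε) - 1 / (8 * (ε + L))) ∧
    Filter.Tendsto (fun ε : ℝ =>
      -(∫ x in E, (1/2) * c x *
          (deriv (deriv (fun y => Real.sqrt (f y) * Real.sqrt (ε + F y))) x /
            (Real.sqrt (f x) * Real.sqrt (ε + F x))) * p x))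
      (nhdsWithin 0 (Set.Ioi 0)) Filter.atTop := by
  -- ## Basic positivity and continuity facts
  have hfpos : ∀ x ∈ E, 0 < f x := fun x hx => by
    rw [hf x hx]; exact mul_pos (hp x hx) (hc x hx)
  have hfcont : ContinuousOn f E := hf2.continuousOn
  have h1fcont : ContinuousOn (fun t => 1 / f t) E :=
    continuousOn_const.div hfcont (fun x hx => (hfpos x hx).ne')
  have hFnonneg : ∀ x, 0 ≤ F x := by
    intro x
    rw [hF x]
    apply setIntegral_nonneg (hE.measurableSet.inter measurableSet_Iio)
    intro y hy
    have := hfpos y hy.1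
    positivity
  have hLpos : 0 < L := by
    rw [hL]
    rw [setIntegral_pos_iff_support_of_nonneg_ae
      (((ae_restrict_iff' hE.measurableSet).2 (Filter.Eventually.of_forall
        (fun t ht => by have := hfpos t ht; positivity)))) hLfin]
    refine lt_of_lt_of_le (hE.measure_pos volume hne) (measure_mono ?_)
    intro t ht
    exact ⟨(one_div_pos.2 (hfpos t ht)).ne', ht⟩
  -- ## Differentiability of f, deriv f, F on E
  have hfdiff : ∀ x ∈ E, HasDerivAt f (deriv f x) x := fun x hx =>
    ((hf2.differentiableOn (by norm_num)).differentiableAt (hE.mem_nhds hx)).hasDerivAt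
  have hf'cd : ContDiffOn ℝ 1 (deriv f) E := hf2.deriv_of_isOpen hE (by norm_num)
  have hf'diff : ∀ x ∈ E, HasDerivAt (deriv f) (deriv (deriv f) x) x := fun x hx =>
    ((hf'cd.differentiableOn (by norm_num)).differentiableAt (hE.mem_nhds hx)).hasDerivAt
  -- F x = F x₀ + ∫ x₀..x for points of E
  have hsub : ∀ x₀ ∈ E, ∀ x ∈ E, x₀ ≤ x →
      F x = F x₀ + ∫ t in x₀..x, 1 / f t := by
    intro x₀ hx₀ x hx hle
    have hIcc : Set.Icc x₀ x ⊆ E := hconn.out hx₀ hx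
    have hset : E ∩ Set.Iio x = (E ∩ Set.Iio x₀) ∪ Set.Ico x₀ x := by
      ext t
      simp only [Set.mem_inter_iff, Set.mem_union, Set.mem_Iio, Set.mem_Ico]
      constructor
      · rintro ⟨h1, h2⟩
        rcases lt_or_ge t x₀ with h | h
        · exact Or.inl ⟨h1, h⟩
        · exact Or.inr ⟨h, h2⟩
      · rintro (⟨h1, h2⟩ | ⟨h1, h2⟩)
        · exact ⟨h1, lt_of_lt_of_le h2 hle⟩
        · exact ⟨hIcc ⟨h1, h2.le⟩, h2⟩
    have hdisj : Disjoint (E ∩ Set.Iio x₀) (Set.Ico x₀ x) := by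
      rw [Set.disjoint_left]
      rintro t ⟨_, ht⟩ ⟨ht', _⟩
      exact absurd ht' (not_le.2 ht)
    rw [hF x, hF x₀, hset,
      setIntegral_union hdisj measurableSet_Ico
        (hLfin.mono_set Set.inter_subset_left)
        (hLfin.mono_set (fun t ht => hIcc (Set.Ico_subset_Icc_self ht))),
      intervalIntegral.integral_of_le hle,
      setIntegral_congr_set Ico_ae_eq_Ioc]
  have hFderiv : ∀ x ∈ E, HasDerivAt F (f x)⁻¹ x := by
    intro x hx
    have hφ : HasDerivAt (fun y => F x + ∫ t in x..y, 1 / f t) (1 / f x) x := by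
      refine HasDerivAt.const_add _ (intervalIntegral.integral_hasDerivAt_right
        IntervalIntegrable.refl ?_ ?_)
      · exact ContinuousOn.stronglyMeasurableAtFilter hE h1fcont x hx
      · exact h1fcont.continuousAt (hE.mem_nhds hx)
    have hev : F =ᶠ[nhds x] (fun y => F x + ∫ t in x..y, 1 / f t) := by
      filter_upwards [hE.mem_nhds hx] with y hy
      rcases le_total x y with h | h
      · exact hsub x hx y hy h
      · have := hsub y hy x hx h
        rw [intervalIntegral.integral_symm]
        linarith
    rw [show (f x)⁻¹ = 1 / f x by rw [one_div]]
    exact (hev.hasDerivAt_iff).2 hφ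
  have hFcont : ContinuousOn F E := fun t ht =>
    ((hFderiv t ht).continuousAt).continuousWithinAt
  -- ## Exhausting sequences
  obtain ⟨x₀, hx₀⟩ := hne
  obtain ⟨u₀, hu₀mem, hu₀le⟩ := exists_exhaust_seq E hE ⟨x₀, hx₀⟩
  obtain ⟨v, hvmem, hvge⟩ : ∃ v : ℕ → ℝ, (∀ n, v n ∈ E) ∧
      ∀ t ∈ E, ∀ᶠ n in Filter.atTop, t < v n := by
    obtain ⟨w, hwmem, hwle⟩ := exists_exhaust_seq (Neg.neg ⁻¹' E)
      (hE.preimage continuous_neg) ⟨-x₀, by simpa using hx₀⟩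
    refine ⟨fun n => -(w n), fun n => hwmem n, fun t ht => ?_⟩
    filter_upwards [hwle (-t) (by simpa using ht)] with n hn
    linarith
  set u : ℕ → ℝ := fun n => min (u₀ n) x₀ with hudef
  have humem : ∀ n, u n ∈ E := by
    intro n
    rcases le_total (u₀ n) x₀ with h | h
    · simpa [hudef, min_eq_left h] using hu₀mem n
    · simpa [hudef, min_eq_right h] using hx₀
  have hule : ∀ t ∈ E, ∀ᶠ n in Filter.atTop, u n ≤ t := fun t ht =>
    (hu₀le t ht).mono fun n h => le_trans (min_le_left _ _) h.le
  have hux₀ : ∀ n, u n ≤ x₀ := fun n => min_le_right _ _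
  set v' : ℕ → ℝ := fun n => max (v n) x₀ with hvdef
  have hv'mem : ∀ n, v' n ∈ E := by
    intro n
    rcases le_total (v n) x₀ with h | h
    · simpa [hvdef, max_eq_right h] using hx₀
    · simpa [hvdef, max_eq_left h] using hvmem n
  have hv'ge : ∀ t ∈ E, ∀ᶠ n in Filter.atTop, t ≤ v' n := fun t ht =>
    (hvge t ht).mono fun n h => le_trans h.le (le_max_left _ _)
  have hv'lt : ∀ t ∈ E, ∀ᶠ n in Filter.atTop, t < v' n := fun t ht =>
    (hvge t ht).mono fun n h => lt_of_lt_of_le h (le_max_left _ _)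
  have hx₀v : ∀ n, x₀ ≤ v' n := fun n => le_max_right _ _
  -- ## Limits of F along the sequences
  have hFu : Filter.Tendsto (fun n => F (u n)) Filter.atTop (nhds 0) := by
    have hdct := tendsto_integral_of_dominated_convergence
      (μ := volume.restrict E)
      (F := fun n t => (Set.Iio (u n)).indicator (fun s => 1 / f s) t)
      (f := fun _ => (0:ℝ)) (fun t => |1 / f t|)
      (fun n => hLfin.aestronglyMeasurable.indicator measurableSet_Iio)
      hLfin.abs
      (fun n => Filter.Eventually.of_forall (fun t => by
        have := norm_indicator_le_norm_self (s := Set.Iio (u n)) (fun s => 1 / f s) t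
        rwa [Real.norm_eq_abs, Real.norm_eq_abs] at this))
      (by
        rw [ae_restrict_iff' hE.measurableSet]
        refine Filter.Eventually.of_forall (fun t ht => ?_)
        refine Filter.Tendsto.congr' ?_ tendsto_const_nhds
        filter_upwards [hule t ht] with n hn
        exact (Set.indicator_of_notMem (by simpa using hn) (fun s => 1 / f s)).symm)
    have heq : (fun n => F (u n)) = fun n =>
        ∫ t in E, (Set.Iio (u n)).indicator (fun s => 1 / f s) t := by
      funext n
      rw [hF (u n), ← setIntegral_indicator measurableSet_Iio]
    rw [heq]
    simpa using hdct
  have hFv : Filter.Tendsto (fun n => F (v' n)) Filter.atTop (nhds L) := by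
    have hdct := tendsto_integral_of_dominated_convergence
      (μ := volume.restrict E)
      (F := fun n t => (Set.Iio (v' n)).indicator (fun s => 1 / f s) t)
      (f := fun t => 1 / f t) (fun t => |1 / f t|)
      (fun n => hLfin.aestronglyMeasurable.indicator measurableSet_Iio)
      hLfin.abs
      (fun n => Filter.Eventually.of_forall (fun t => by
        have := norm_indicator_le_norm_self (s := Set.Iio (v' n)) (fun s => 1 / f s) t
        rwa [Real.norm_eq_abs, Real.norm_eq_abs] at this))
      (by
        rw [ae_restrict_iff' hE.measurableSet]
        refine Filter.Eventually.of_forall (fun t ht => ?_)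
        refine Filter.Tendsto.congr' ?_ tendsto_const_nhds
        filter_upwards [hv'lt t ht] with n hn
        exact (Set.indicator_of_mem (Set.mem_Iio.2 hn) (fun s => 1 / f s)).symm)
    have heq : (fun n => F (v' n)) = fun n =>
        ∫ t in E, (Set.Iio (v' n)).indicator (fun s => 1 / f s) t := by
      funext n
      rw [hF (v' n), ← setIntegral_indicator measurableSet_Iio]
    rw [heq, hL]
    exact hdct
  -- ## Key identity for each ε > 0
  have key : ∀ ε : ℝ, 0 < ε →
      -(∫ x in E, (1/2) * c x *
          (deriv (deriv (fun y => Real.sqrt (f y) * Real.sqrt (ε + F y))) x /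
            (Real.sqrt (f x) * Real.sqrt (ε + F x))) * p x)
      = -(∫ x in E, g x) + 1 / (8 * ε) - 1 / (8 * (ε + L)) := by
    intro ε hε
    have hεF : ∀ t, 0 < ε + F t := fun t => by have := hFnonneg t; linarith
    -- the correction term h
    set h : ℝ → ℝ := fun t => (f t)⁻¹ / (ε + F t)^2 with hhdef
    have hhcont : ContinuousOn h E :=
      ContinuousOn.div (hfcont.inv₀ fun t ht => (hfpos t ht).ne')
        ((continuousOn_const.add hFcont).pow 2)
        (fun t ht => pow_ne_zero 2 (hεF t).ne')
    have hhint : IntegrableOn h E := by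
      refine Integrable.mono (hLfin.const_mul ((ε^2)⁻¹))
        (hhcont.aestronglyMeasurable hE.measurableSet) ?_
      rw [ae_restrict_iff' hE.measurableSet]
      refine Filter.Eventually.of_forall (fun t ht => ?_)
      have hft := hfpos t ht
      have hFt := hFnonneg t
      have hht : h t = (f t)⁻¹ / (ε + F t)^2 := rfl
      rw [hht]
      rw [Real.norm_eq_abs, Real.norm_eq_abs, abs_of_nonneg (by positivity),
        abs_of_nonneg (by positivity), one_div]
      rw [show (ε^2)⁻¹ * (f t)⁻¹ = (f t)⁻¹ / ε^2 by ring]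
      gcongr
      · nlinarith
    -- derivatives of the square-root factors on E
    have hsq : ∀ x ∈ E, HasDerivAt (fun y => Real.sqrt (f y))
        (1 / (2 * Real.sqrt (f x)) * deriv f x) x := fun x hx =>
      HasDerivAt.comp x (Real.hasDerivAt_sqrt (hfpos x hx).ne') (hfdiff x hx)
    have hsq2 : ∀ x ∈ E, HasDerivAt (fun y => Real.sqrt (ε + F y))
        (1 / (2 * Real.sqrt (ε + F x)) * (f x)⁻¹) x := fun x hx =>
      HasDerivAt.comp x (Real.hasDerivAt_sqrt (hεF x).ne')
        ((hFderiv x hx).const_add ε)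
    -- first derivative of w = √f·√(ε+F) on E
    have hw : ∀ x ∈ E, HasDerivAt (fun y => Real.sqrt (f y) * Real.sqrt (ε + F y))
        (deriv f x * Real.sqrt (ε + F x) / (2 * Real.sqrt (f x)) +
          1 / (2 * (Real.sqrt (f x) * Real.sqrt (ε + F x)))) x := by
      intro x hx
      have hfx := hfpos x hx
      have hεFx := hεF x
      have hmul : HasDerivAt (fun y => Real.sqrt (f y) * Real.sqrt (ε + F y))
          (1 / (2 * Real.sqrt (f x)) * deriv f x * Real.sqrt (ε + F x) +
            Real.sqrt (f x) * (1 / (2 * Real.sqrt (ε + F x)) * (f x)⁻¹)) x :=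
        (hsq x hx).mul (hsq2 x hx)
      convert hmul using 1
      have ha0 : 0 < Real.sqrt (f x) := Real.sqrt_pos.2 hfx
      have hb0 : 0 < Real.sqrt (ε + F x) := Real.sqrt_pos.2 hεFx
      set a := Real.sqrt (f x) with hadef
      set b := Real.sqrt (ε + F x) with hbdef
      have hfa : f x = a * a := (Real.mul_self_sqrt hfx.le).symm
      rw [hfa]
      field_simp
    -- pointwise identity of the integrand on E
    have hpt : ∀ x ∈ E, (1/2) * c x *
        (deriv (deriv (fun y => Real.sqrt (f y) * Real.sqrt (ε + F y))) x /
          (Real.sqrt (f x) * Real.sqrt (ε + F x))) * p x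
        = g x - (1/8) * h x := by
      intro x hx
      have hfx := hfpos x hx
      have hεFx := hεF x
      have ha0 : 0 < Real.sqrt (f x) := Real.sqrt_pos.2 hfx
      have hb0 : 0 < Real.sqrt (ε + F x) := Real.sqrt_pos.2 hεFx
      have hev1 : deriv (fun y => Real.sqrt (f y) * Real.sqrt (ε + F y)) =ᶠ[nhds x]
          (fun y => deriv f y * Real.sqrt (ε + F y) / (2 * Real.sqrt (f y)) +
            1 / (2 * (Real.sqrt (f y) * Real.sqrt (ε + F y)))) := by
        filter_upwards [hE.mem_nhds hx] with y hy
        exact (hw y hy).deriv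
      have hdd : deriv (deriv (fun y => Real.sqrt (f y) * Real.sqrt (ε + F y))) x =
          deriv (fun y => deriv f y * Real.sqrt (ε + F y) / (2 * Real.sqrt (f y)) +
            1 / (2 * (Real.sqrt (f y) * Real.sqrt (ε + F y)))) x := hev1.deriv_eq
      have t1 := HasDerivAt.div ((hf'diff x hx).mul (hsq2 x hx))
        (HasDerivAt.const_mul 2 (hsq x hx)) (by positivity)
      have t2 := HasDerivAt.div (hasDerivAt_const x (1:ℝ))
        (HasDerivAt.const_mul 2 ((hsq x hx).mul (hsq2 x hx))) (mul_ne_zero two_ne_zero (mul_pos ha0 hb0).ne')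
      have hD : deriv (fun y => deriv f y * Real.sqrt (ε + F y) / (2 * Real.sqrt (f y)) +
            1 / (2 * (Real.sqrt (f y) * Real.sqrt (ε + F y)))) x =
          ((deriv (deriv f) x * Real.sqrt (ε + F x) +
              deriv f x * (1 / (2 * Real.sqrt (ε + F x)) * (f x)⁻¹)) * (2 * Real.sqrt (f x)) -
            deriv f x * Real.sqrt (ε + F x) *
              (2 * (1 / (2 * Real.sqrt (f x)) * deriv f x))) / (2 * Real.sqrt (f x))^2 +
          (0 * (2 * (Real.sqrt (f x) * Real.sqrt (ε + F x))) -
            1 * (2 * (1 / (2 * Real.sqrt (f x)) * deriv f x * Real.sqrt (ε + F x) +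
              Real.sqrt (f x) * (1 / (2 * Real.sqrt (ε + F x)) * (f x)⁻¹)))) /
            (2 * (Real.sqrt (f x) * Real.sqrt (ε + F x)))^2 :=
        (t1.add t2).deriv
      have hhx : h x = (f x)⁻¹ / (ε + F x)^2 := rfl
      rw [hdd, hD, hg x hx, hhx]
      have hpx : p x = f x / c x := by
        rw [hf x hx, mul_div_assoc, div_self (hc x hx).ne', mul_one]
      rw [hpx]
      set a := Real.sqrt (f x) with hadef
      set b := Real.sqrt (ε + F x) with hbdef
      have haa : f x = a^2 := (Real.sq_sqrt hfx.le).symm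
      have hbb : ε + F x = b^2 := (Real.sq_sqrt hεFx.le).symm
      rw [haa, hbb]
      have ha0' : a ≠ 0 := ha0.ne'
      have hb0' : b ≠ 0 := hb0.ne'
      have hc0' : c x ≠ 0 := (hc x hx).ne'
      field_simp
      ring
    -- FTC for the correction term on compact subintervals
    have hIccE : ∀ n, Set.Icc (u n) (v' n) ⊆ E := fun n =>
      hconn.out (humem n) (hv'mem n)
    have huv : ∀ n, u n ≤ v' n := fun n => le_trans (hux₀ n) (hx₀v n)
    have hGd : ∀ t ∈ E, HasDerivAt (fun y => -(ε + F y)⁻¹) (h t) t := by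
      intro t ht
      have h1 : HasDerivAt (fun y => -(ε + F y)⁻¹) (-(-(f t)⁻¹ / (ε + F t)^2)) t :=
        (((hFderiv t ht).const_add ε).inv (hεF t).ne').neg
      have hht : h t = (f t)⁻¹ / (ε + F t)^2 := rfl
      rw [hht]
      convert h1 using 1
      ring
    have hftc : ∀ n, ∫ t in Set.Icc (u n) (v' n), h t =
        (ε + F (u n))⁻¹ - (ε + F (v' n))⁻¹ := by
      intro n
      have hic : Set.uIcc (u n) (v' n) = Set.Icc (u n) (v' n) := Set.uIcc_of_le (huv n)
      have hii : IntervalIntegrable h volume (u n) (v' n) := by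
        apply ContinuousOn.intervalIntegrable
        rw [hic]
        exact hhcont.mono (hIccE n)
      have hint := intervalIntegral.integral_eq_sub_of_hasDerivAt
        (f := fun y => -(ε + F y)⁻¹) (f' := h)
        (fun t ht => hGd t (hIccE n (by rwa [hic] at ht))) hii
      rw [intervalIntegral.integral_of_le (huv n)] at hint
      rw [integral_Icc_eq_integral_Ioc, hint]
      ring
    -- the integral of h over E
    have hDCTh : Filter.Tendsto (fun n => ∫ t in E ∩ Set.Icc (u n) (v' n), h t)
        Filter.atTop (nhds (∫ t in E, h t)) := by
      have hdct := tendsto_integral_of_dominated_convergence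
        (μ := volume.restrict E)
        (F := fun n t => (Set.Icc (u n) (v' n)).indicator h t)
        (f := h) (fun t => |h t|)
        (fun n => hhint.aestronglyMeasurable.indicator measurableSet_Icc)
        hhint.abs
        (fun n => Filter.Eventually.of_forall (fun t => by
          have := norm_indicator_le_norm_self (s := Set.Icc (u n) (v' n)) h t
          rwa [Real.norm_eq_abs, Real.norm_eq_abs] at this))
        (by
          rw [ae_restrict_iff' hE.measurableSet]
          refine Filter.Eventually.of_forall (fun t ht => ?_)
          refine Filter.Tendsto.congr' ?_ tendsto_const_nhds
          filter_upwards [hule t ht, hv'ge t ht] with n h1 h2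
          exact (Set.indicator_of_mem (Set.mem_Icc.2 ⟨h1, h2⟩) h).symm)
      exact hdct.congr fun n => setIntegral_indicator measurableSet_Icc
    have hlim2 : Filter.Tendsto (fun n => (ε + F (u n))⁻¹ - (ε + F (v' n))⁻¹)
        Filter.atTop (nhds (ε⁻¹ - (ε + L)⁻¹)) := by
      have l1 : Filter.Tendsto (fun n => ε + F (u n)) Filter.atTop (nhds (ε + 0)) :=
        tendsto_const_nhds.add hFu
      have l2 : Filter.Tendsto (fun n => ε + F (v' n)) Filter.atTop (nhds (ε + L)) :=
        tendsto_const_nhds.add hFv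
      have := (l1.inv₀ (by simpa using hε.ne')).sub (l2.inv₀ (by positivity))
      simpa using this
    have hIntH : ∫ t in E, h t = ε⁻¹ - (ε + L)⁻¹ := by
      refine tendsto_nhds_unique ?_ hlim2
      refine hDCTh.congr fun n => ?_
      rw [Set.inter_eq_self_of_subset_right (hIccE n), hftc n]
    -- assemble
    rw [setIntegral_congr_fun hE.measurableSet (fun x hx => hpt x hx)]
    rw [integral_sub hgint (hhint.const_mul _), integral_const_mul, hIntH]
    have hεL : 0 < ε + L := by positivity
    field_simp
    ring
  refine ⟨key, ?_⟩
  -- ## Blow-up as ε ↓ 0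
  have hev : (fun ε : ℝ => -(∫ x in E, g x) + 1 / (8 * ε) - 1 / (8 * (ε + L)))
      =ᶠ[nhdsWithin 0 (Set.Ioi 0)] (fun ε : ℝ =>
      -(∫ x in E, (1/2) * c x *
          (deriv (deriv (fun y => Real.sqrt (f y) * Real.sqrt (ε + F y))) x /
            (Real.sqrt (f x) * Real.sqrt (ε + F x))) * p x)) := by
    filter_upwards [self_mem_nhdsWithin] with ε hε
    exact (key ε hε).symm
  refine Filter.Tendsto.congr' hev ?_
  have h1 : Filter.Tendsto (fun ε : ℝ => 1 / (8 * ε)) (nhdsWithin 0 (Set.Ioi 0))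
      Filter.atTop := by
    have hmaps : Filter.Tendsto (fun ε : ℝ => 8 * ε) (nhdsWithin 0 (Set.Ioi 0))
        (nhdsWithin 0 (Set.Ioi 0)) := by
      rw [tendsto_nhdsWithin_iff]
      constructor
      · have : Filter.Tendsto (fun ε : ℝ => 8 * ε) (nhds 0) (nhds (8 * 0)) :=
          (continuous_const.mul continuous_id).tendsto 0
        simpa using this.mono_left nhdsWithin_le_nhds
      · filter_upwards [self_mem_nhdsWithin] with ε hε
        exact mul_pos (by norm_num : (0:ℝ) < 8) hε
    have := tendsto_inv_nhdsGT_zero.comp hmaps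
    refine this.congr fun ε => ?_
    simp [one_div, Function.comp]
  have h2 : Filter.Tendsto (fun ε : ℝ => -(∫ x in E, g x) - 1 / (8 * (ε + L)))
      (nhdsWithin 0 (Set.Ioi 0)) (nhds (-(∫ x in E, g x) - 1 / (8 * (0 + L)))) := by
    apply Filter.Tendsto.mono_left _ nhdsWithin_le_nhds
    apply Filter.Tendsto.sub tendsto_const_nhds
    apply Filter.Tendsto.div tendsto_const_nhds
    · exact (continuous_const.mul (continuous_id.add continuous_const)).tendsto' 0 _ rfl
    · positivity
  have hsum := h1.atTop_add h2
  refine hsum.congr fun ε => ?_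
  ring
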